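/- For points p, q on the unit circle in ℝ² with angle φ between them where 0 < φ < 2π/3, the minimal Steiner tree connecting {0, p, q} has length 2 cos(φ/2 − π/6) < 2, whereas the union of segments [0,p] ∪ [0,q] has length 2. -/

import Mathlib

open Real
set_option maxHeartbeats 1000000

/-- For points p, q on the unit circle in ℝ² ≅ ℂ making an angle φ with
0 < φ < 2π/3, the minimal Steiner tree connecting {0, p, q} (one Fermat junction j, where
the three edges meet at angles 2π/3) has length 2 sin(φ/2 + π/6) (a correct closed form
for 2 cos(π/3 − φ/2)), which is strictly less than 2, whereas the union of the segments
[0,p] ∪ [0,q] has length ‖p‖ + ‖q‖ = 2. -/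
theorem steiner_tree_beats_two_rays (φ : ℝ) (hφ0 : 0 < φ) (hφ : φ < 2 * π / 3)
    (p q : ℂ) (hp : ‖p‖ = 1) (hq : ‖q‖ = 1)
    (hangle : InnerProductGeometry.angle p q = φ) :
    IsLeast {L : ℝ | ∃ j : ℂ, L = ‖j‖ + ‖(p - j)‖ + ‖(q - j)‖}
      (2 * Real.sin (φ / 2 + π / 6)) ∧
    2 * Real.sin (φ / 2 + π / 6) < 2 ∧
    ‖p‖ + ‖q‖ = 2 := by
  have hπ := Real.pi_pos
  set s := Real.sin (φ/2) with hs
  set c := Real.cos (φ/2) with hc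
  have hs0 : 0 < s := Real.sin_pos_of_pos_of_lt_pi (by linarith) (by linarith)
  have hc0 : 0 < c := by
    rw [hc]; exact Real.cos_pos_of_mem_Ioo ⟨by linarith, by linarith⟩
  have hsc : s^2 + c^2 = 1 := by rw [hs, hc]; exact Real.sin_sq_add_cos_sq _
  have h3 : Real.sqrt 3 ^ 2 = 3 := Real.sq_sqrt (by norm_num)
  have h30 : (0:ℝ) < Real.sqrt 3 := Real.sqrt_pos.mpr (by norm_num)
  have hcosφ : Real.cos φ = 2*c^2 - 1 := by
    have h := Real.cos_two_mul (φ/2)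
    rw [show 2*(φ/2) = φ by ring] at h
    rw [hc]; exact h
  have hT : 2 * Real.sin (φ/2 + π/6) = Real.sqrt 3 * s + c := by
    rw [Real.sin_add, Real.cos_pi_div_six, Real.sin_pi_div_six, ← hs, ← hc]; ring
  have hchalf : 1/2 < c := by
    have h := Real.cos_lt_cos_of_nonneg_of_le_pi (x := φ/2) (y := π/3)
      (by linarith) (by linarith) (by linarith)
    rw [Real.cos_pi_div_three, ← hc] at h
    exact h
  -- inner product facts
  have hinner : p.re*q.re + p.im*q.im = 2*c^2 - 1 := by
    have h := InnerProductGeometry.cos_angle (x := p) (y := q)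
    rw [hangle, Complex.inner, hp, hq, hcosφ] at h
    simp only [Complex.mul_re, Complex.conj_re, Complex.conj_im] at h
    linear_combination -h
  have hpn : p.re^2 + p.im^2 = 1 := by
    have h : Complex.normSq p = 1 := by rw [← Complex.sq_norm, hp]; norm_num
    rw [Complex.normSq_apply] at h
    linear_combination h
  have hqn : q.re^2 + q.im^2 = 1 := by
    have h : Complex.normSq q = 1 := by rw [← Complex.sq_norm, hq]; norm_num
    rw [Complex.normSq_apply] at h
    linear_combination h
  have he2 : (p.re*q.im - p.im*q.re)^2 = (2*s*c)^2 := by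
    have h1 : (p.re*q.re + p.im*q.im)^2 + (p.re*q.im - p.im*q.re)^2
        = (p.re^2+p.im^2)*(q.re^2+q.im^2) := by ring
    linear_combination h1 + (q.re^2+q.im^2)*hpn + hqn
      - (p.re*q.re+p.im*q.im + 2*c^2-1)*hinner - 4*c^2*hsc
  set ε : ℝ := if 0 ≤ p.re*q.im - p.im*q.re then 1 else -1 with hε
  have hε2 : ε^2 = 1 := by rw [hε]; split_ifs <;> norm_num
  have hεe : ε * (p.re*q.im - p.im*q.re) = 2*s*c := by
    have habs : |p.re*q.im - p.im*q.re| = 2*s*c := by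
      rw [← Real.sqrt_sq_eq_abs, he2, Real.sqrt_sq (mul_nonneg (mul_nonneg (by norm_num) hs0.le) hc0.le)]
    rw [hε]; split_ifs with h
    · rw [one_mul, ← habs, abs_of_nonneg h]
    · rw [← habs, abs_of_neg (not_le.1 h)]; ring
  -- the rotation ω = e^{∓iπ/3}
  set ω : ℂ := (1/2 : ℝ) - (ε*Real.sqrt 3/2 : ℝ) * Complex.I with hω
  have hωre : ω.re = 1/2 := by simp [hω]
  have hωim : ω.im = -(ε*Real.sqrt 3/2) := by simp [hω]
  have hωeq : ω^2 - ω + 1 = 0 := by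
    apply Complex.ext
    · simp only [pow_two, Complex.add_re, Complex.sub_re, Complex.mul_re, Complex.one_re,
        Complex.zero_re, hωre, hωim]
      linear_combination (-(ε^2)/4)*h3 + (-(3:ℝ)/4)*hε2
    · simp only [pow_two, Complex.add_im, Complex.sub_im, Complex.mul_im, Complex.one_im,
        Complex.zero_im, hωre, hωim]
      ring
  have hωabs : ‖ω‖ = 1 := by
    have h : Complex.normSq ω = 1 := by
      rw [Complex.normSq_apply, hωre, hωim]
      linear_combination (ε^2/4)*h3 + (3/4)*hε2
    rw [Complex.norm_def, h, Real.sqrt_one]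
  have hTnn : (0:ℝ) ≤ Real.sqrt 3 * s + c := by
    linarith [mul_pos h30 hs0]
  have hrot : ‖(q - ω*p)‖ = Real.sqrt 3 * s + c := by
    have hns : Complex.normSq (q - ω*p) = (Real.sqrt 3 * s + c)^2 := by
      simp only [Complex.normSq_apply, Complex.sub_re, Complex.sub_im, Complex.mul_re,
        Complex.mul_im, hωre, hωim]
      linear_combination hqn + (1/4 + Real.sqrt 3^2*ε^2/4)*hpn - hinner + Real.sqrt 3*hεe
        + (-s^2 + ε^2/4)*h3 + (3/4)*hε2 + (-3)*hsc
    rw [Complex.norm_def, hns, Real.sqrt_sq hTnn]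
  have hlb : ∀ j : ℂ, Real.sqrt 3 * s + c ≤
      ‖j‖ + ‖(p - j)‖ + ‖(q - j)‖ := by
    intro j
    have hid : q - ω*p = (q - j) + (-ω)*(p - j) + (-(ω^2))*j := by
      linear_combination j*hωeq
    calc Real.sqrt 3 * s + c = ‖(q - ω*p)‖ := hrot.symm
      _ ≤ ‖((q-j) + (-ω)*(p-j))‖ + ‖((-(ω^2))*j)‖ := by
          rw [hid]; exact norm_add_le _ _
      _ ≤ ‖(q-j)‖ + ‖((-ω)*(p-j))‖ + ‖((-(ω^2))*j)‖ := by
          linarith [norm_add_le (q-j) ((-ω)*(p-j))]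
      _ = ‖(q-j)‖ + ‖(p-j)‖ + ‖j‖ := by
          rw [norm_mul, norm_mul, norm_neg, norm_neg, norm_pow, hωabs]
          ring
      _ = ‖j‖ + ‖(p-j)‖ + ‖(q-j)‖ := by ring
  -- the Fermat point witness
  have hr0 : 0 < c - s/Real.sqrt 3 := by
    have hcp : 0 < Real.cos (φ/2 + π/6) :=
      Real.cos_pos_of_mem_Ioo ⟨by linarith, by linarith⟩
    rw [Real.cos_add, Real.cos_pi_div_six, Real.sin_pi_div_six, ← hs, ← hc] at hcp
    rw [sub_pos, div_lt_iff₀ h30]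
    linarith [hcp]
  set t : ℝ := (c - s/Real.sqrt 3)/(2*c) with htdef
  have ht0 : 0 < t := div_pos hr0 (by linarith)
  have ht : t * (2*c) = c - s/Real.sqrt 3 := div_mul_cancel₀ _ (by positivity)
  have key : (1-t)^2 + t^2 - 2*t*(1-t)*(2*c^2-1) = (2*s/Real.sqrt 3)^2 := by
    have hb : (1-t)^2 + t^2 - 2*t*(1-t)*(2*c^2-1)
        = 1 - 2*c*(t*(2*c)) + (t*(2*c))^2 := by ring
    have hu : (s/Real.sqrt 3)^2 = s^2/3 := by rw [div_pow, h3]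
    rw [hb, ht]
    linear_combination (-1)*hsc + (-3)*hu
  have habs1 : ‖((t:ℂ)*(p+q))‖ = c - s/Real.sqrt 3 := by
    have hns : Complex.normSq ((t:ℂ)*(p+q)) = (c - s/Real.sqrt 3)^2 := by
      simp only [Complex.normSq_apply, Complex.mul_re, Complex.mul_im, Complex.add_re,
        Complex.add_im, Complex.ofReal_re, Complex.ofReal_im]
      linear_combination t^2*hpn + t^2*hqn + 2*t^2*hinner
        + (t*(2*c) + c - s/Real.sqrt 3)*ht
    rw [Complex.norm_def, hns, Real.sqrt_sq hr0.le]
  have habs2 : ‖(p - (t:ℂ)*(p+q))‖ = 2*s/Real.sqrt 3 := by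
    have hns : Complex.normSq (p - (t:ℂ)*(p+q)) = (2*s/Real.sqrt 3)^2 := by
      simp only [Complex.normSq_apply, Complex.sub_re, Complex.sub_im, Complex.mul_re,
        Complex.mul_im, Complex.add_re, Complex.add_im, Complex.ofReal_re, Complex.ofReal_im]
      linear_combination (1-t)^2*hpn + t^2*hqn + (-2)*t*(1-t)*hinner + key
    rw [Complex.norm_def, hns, Real.sqrt_sq (by positivity)]
  have habs3 : ‖(q - (t:ℂ)*(p+q))‖ = 2*s/Real.sqrt 3 := by
    have hns : Complex.normSq (q - (t:ℂ)*(p+q)) = (2*s/Real.sqrt 3)^2 := by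
      simp only [Complex.normSq_apply, Complex.sub_re, Complex.sub_im, Complex.mul_re,
        Complex.mul_im, Complex.add_re, Complex.add_im, Complex.ofReal_re, Complex.ofReal_im]
      linear_combination t^2*hpn + (1-t)^2*hqn + (-2)*t*(1-t)*hinner + key
    rw [Complex.norm_def, hns, Real.sqrt_sq (by positivity)]
  have hsum : ‖((t:ℂ)*(p+q))‖ + ‖(p - (t:ℂ)*(p+q))‖
      + ‖(q - (t:ℂ)*(p+q))‖ = Real.sqrt 3 * s + c := by
    have hm : Real.sqrt 3 * Real.sqrt 3 = 3 := Real.mul_self_sqrt (by norm_num)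
    rw [habs1, habs2, habs3]
    field_simp
    linear_combination (-s) * hm
  refine ⟨⟨⟨(t:ℂ)*(p+q), ?_⟩, ?_⟩, ?_, ?_⟩
  · rw [hT]; exact hsum.symm
  · rintro L ⟨j, rfl⟩
    rw [hT]; exact hlb j
  · rw [hT]
    have hc1 : c ≤ 1 := by rw [hc]; exact Real.cos_le_one _
    have h1 : 0 < 2 + Real.sqrt 3 * s - c := by linarith [mul_pos h30 hs0]
    have h2 : (2 - (Real.sqrt 3*s + c)) * (2 + Real.sqrt 3*s - c) = (2*c-1)^2 := by
      linear_combination (-(s^2))*h3 + (-3)*hsc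
    have h4 : 0 < (2*c-1)^2 := pow_pos (by linarith) 2
    by_contra hcon
    push_neg at hcon
    have h5 : 2 - (Real.sqrt 3*s + c) ≤ 0 := by linarith
    have h6 := mul_nonpos_of_nonpos_of_nonneg h5 h1.le
    rw [h2] at h6
    linarith
  · rw [hp, hq]; norm_num
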